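/- There exists no scoring method on 4-player ranking problems satisfying neutrality, symmetry, strong order preservation, and self-consistency simultaneously. -/

import Mathlib

open Finset

/-- A ranking problem: skew-symmetric results matrix `R`, symmetric
nonnegative-integer matches matrix `M`, with `|R i j| ≤ M i j`. -/
structure RP (n : ℕ) where
  R : Fin n → Fin n → ℝ
  M : Fin n → Fin n → ℕ
  skew : ∀ i j, R j i = - R i j
  symm : ∀ i j, M j i = M i j
  bound : ∀ i j, |R i j| ≤ (M i j : ℝ)

/-- Sum of two ranking problems. -/
def RP.add {n : ℕ} (P Q : RP n) : RP n where
  R i j := P.R i j + Q.R i j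
  M i j := P.M i j + Q.M i j
  skew i j := by rw [P.skew i j, Q.skew i j]; ring
  symm i j := by rw [P.symm i j, Q.symm i j]
  bound i j := by
    calc |P.R i j + Q.R i j| ≤ |P.R i j| + |Q.R i j| := abs_add_le _ _
      _ ≤ (P.M i j : ℝ) + (Q.M i j : ℝ) := add_le_add (P.bound i j) (Q.bound i j)
      _ = ((P.M i j + Q.M i j : ℕ) : ℝ) := by push_cast; ring

/-- The ranking problem with all results reversed. -/
def RP.neg {n : ℕ} (P : RP n) : RP n where
  R i j := - P.R i j
  M := P.M
  skew i j := by rw [P.skew i j]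
  symm := P.symm
  bound i j := by simpa using P.bound i j

/-- Relabelling the players by a permutation. -/
def RP.relabel {n : ℕ} (σ : Equiv.Perm (Fin n)) (P : RP n) : RP n where
  R i j := P.R (σ.symm i) (σ.symm j)
  M i j := P.M (σ.symm i) (σ.symm j)
  skew i j := P.skew _ _
  symm i j := P.symm _ _
  bound i j := P.bound _ _

/-- All players have played `m` matches. -/
def RPBalanced {n : ℕ} (P : RP n) (m : ℕ) : Prop := ∀ i, ∑ j, P.M i j = m

/-- Symmetry (SYM): if all results are draws, all scores are equal. -/
def SYM {n : ℕ} (f : RP n → Fin n → ℝ) : Prop :=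
  ∀ P : RP n, (∀ i j, P.R i j = 0) → ∀ i j, f P i = f P j

/-- Inversion (INV). -/
def INV {n : ℕ} (f : RP n → Fin n → ℝ) : Prop :=
  ∀ P : RP n, ∀ i j, f P i ≥ f P j ↔ f P.neg i ≤ f P.neg j

/-- Order preservation (OP). -/
def OP {n : ℕ} (f : RP n → Fin n → ℝ) : Prop :=
  ∀ P Q : RP n, ∀ m m' : ℕ, RPBalanced P m → RPBalanced Q m' →
    ∀ i j, f P i ≥ f P j → f Q i ≥ f Q j →
      f (P.add Q) i ≥ f (P.add Q) j ∧
      ((f P i > f P j ∨ f Q i > f Q j) → f (P.add Q) i > f (P.add Q) j)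

/-- Strong order preservation (SOP). -/
def SOP {n : ℕ} (f : RP n → Fin n → ℝ) : Prop :=
  ∀ P Q : RP n, ∀ i j, f P i ≥ f P j → f Q i ≥ f Q j →
      f (P.add Q) i ≥ f (P.add Q) j ∧
      ((f P i > f P j ∨ f Q i > f Q j) → f (P.add Q) i > f (P.add Q) j)

/-- Neutrality (NEU). -/
def NEU {n : ℕ} (f : RP n → Fin n → ℝ) : Prop :=
  ∀ σ : Equiv.Perm (Fin n), ∀ P : RP n, ∀ i, f P i = f (P.relabel σ) (σ i)

/-- Independence of irrelevant matches (IIM). -/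
def IIM {n : ℕ} (f : RP n → Fin n → ℝ) : Prop :=
  ∀ P Q : RP n, ∀ i j k l : Fin n,
    i ≠ k → i ≠ l → j ≠ k → j ≠ l → i ≠ j → k ≠ l →
    (∀ a b, ¬((a = k ∧ b = l) ∨ (a = l ∧ b = k)) → P.R a b = Q.R a b ∧ P.M a b = Q.M a b) →
    f P i ≥ f P j → f Q i ≥ f Q j

/-- A decomposition of a ranking problem into per-match results:
match `t` between `a` and `b` (for `t < M a b`) has result `res a b t ∈ [-1,1]`,
and the results sum to `R a b`. -/
structure RP.Decomp {n : ℕ} (P : RP n) where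
  res : Fin n → Fin n → ℕ → ℝ
  skew : ∀ a b t, res b a t = - res a b t
  bound : ∀ a b t, t < P.M a b → |res a b t| ≤ 1
  sum : ∀ a b, ∑ t ∈ Finset.range (P.M a b), res a b t = P.R a b

/-- The opponent multiset of player `i`: `M i k` copies of each `k`. -/
def RP.Matches {n : ℕ} (P : RP n) (i : Fin n) := Σ k : Fin n, Fin (P.M i k)

/-- Self-consistency (SC): if there is a bijection between the opponent
multisets of `i` and `j` matching each match of `i` to a match of `j` with a
weakly smaller per-match result against a weakly weaker opponent, then
`f i ≥ f j`, strictly if some comparison is strict. -/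
def SC {n : ℕ} (f : RP n → Fin n → ℝ) : Prop :=
  ∀ P : RP n, ∀ d : P.Decomp, ∀ i j : Fin n, ∀ e : P.Matches i ≃ P.Matches j,
    (∀ m : P.Matches i,
      d.res i m.1 m.2.1 ≥ d.res j (e m).1 (e m).2.1 ∧ f P m.1 ≥ f P (e m).1) →
    f P i ≥ f P j ∧
    ((∃ m : P.Matches i,
        d.res i m.1 m.2.1 > d.res j (e m).1 (e m).2.1 ∨ f P m.1 > f P (e m).1) →
      f P i > f P j)


/-! ### Auxiliary constructions for the impossibility proof -/

/-- The transposition of players 0 and 1 as a plain function. -/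
def tf : Fin 4 → Fin 4 := fun i => if i = 0 then 1 else if i = 1 then 0 else i

/-- The transposition of players 0 and 1. -/
def tau : Equiv.Perm (Fin 4) := ⟨tf, tf, by intro x; revert x; decide, by intro x; revert x; decide⟩

/-- Integer results matrix of the key problem `A`. -/
def RZ : Fin 4 → Fin 4 → ℤ := fun i j =>
  if (i = 0 ∨ i = 1) ∧ j = 2 then 1 else if i = 2 ∧ (j = 0 ∨ j = 1) then -1 else 0

/-- Matches matrix of the key problem `A`. -/
def MA : Fin 4 → Fin 4 → ℕ := fun i j =>
  if (i = 0 ∧ j = 2) ∨ (i = 2 ∧ j = 0) then 1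
  else if (i = 0 ∧ j = 3) ∨ (i = 3 ∧ j = 0) then 2
  else if (i = 1 ∧ j = 2) ∨ (i = 2 ∧ j = 1) then 2
  else if (i = 1 ∧ j = 3) ∨ (i = 3 ∧ j = 1) then 1
  else 0

/-- Real results matrix of the key problem `A`. -/
def RA : Fin 4 → Fin 4 → ℝ := fun i j => ((RZ i j : ℤ) : ℝ)

/-- The key ranking problem `A`:
player 0 : beats 2, draws 3 twice;
player 1 : beats 2, draws 2, draws 3;
player 2 : loses to 0, loses to 1, draws 1;
player 3 : draws 0 twice, draws 1. -/
def A : RP 4 where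
  R := RA
  M := MA
  skew := by
    have h : ∀ a b : Fin 4, RZ b a = -RZ a b := by decide
    intro i j
    simp [RA, h j i]
  symm := by decide
  bound := by
    have h : ∀ a b : Fin 4, |RZ a b| ≤ (MA a b : ℤ) := by decide
    intro i j
    show |((RZ i j : ℤ) : ℝ)| ≤ ((MA i j : ℕ) : ℝ)
    exact_mod_cast h i j

/-- Per-match results for `A`: the decisive result is the first match. -/
def resA : Fin 4 → Fin 4 → ℕ → ℝ := fun a b t => if t = 0 then RA a b else 0

/-- The canonical decomposition of `A`. -/
def dA : A.Decomp where
  res := resA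
  skew := by
    have h : ∀ a b : Fin 4, RZ b a = -RZ a b := by decide
    intro a b t
    by_cases ht : t = 0 <;> simp [resA, ht, RA, h b a]
  bound := by
    have h : ∀ a b : Fin 4, |RZ a b| ≤ 1 := by decide
    intro a b t _
    by_cases ht : t = 0
    · show |if t = 0 then ((RZ a b : ℤ) : ℝ) else 0| ≤ 1
      rw [if_pos ht]
      exact_mod_cast h a b
    · show |if t = 0 then ((RZ a b : ℤ) : ℝ) else 0| ≤ 1
      rw [if_neg ht]; norm_num
  sum := by
    have h0 : ∀ a b : Fin 4, MA a b = 0 → RZ a b = 0 := by decide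
    intro a b
    show (∑ t ∈ Finset.range (MA a b), if t = 0 then RA a b else 0) = RA a b
    rw [Finset.sum_ite_eq' (Finset.range (MA a b)) 0 (fun _ => RA a b)]
    by_cases h : 0 < MA a b
    · rw [if_pos (Finset.mem_range.mpr h)]
    · rw [if_neg (fun hc => h (Finset.mem_range.mp hc))]
      have := h0 a b (by omega)
      simp [RA, this]

lemma mem0 : ∀ m : Σ k : Fin 4, Fin (A.M 0 k),
    m = ⟨2, ⟨0, by decide⟩⟩ ∨ m = ⟨3, ⟨0, by decide⟩⟩ ∨ m = ⟨3, ⟨1, by decide⟩⟩ := by decide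

lemma mem1 : ∀ m : Σ k : Fin 4, Fin (A.M 1 k),
    m = ⟨2, ⟨0, by decide⟩⟩ ∨ m = ⟨2, ⟨1, by decide⟩⟩ ∨ m = ⟨3, ⟨0, by decide⟩⟩ := by decide

lemma mem3 : ∀ m : Σ k : Fin 4, Fin (A.M 3 k),
    m = ⟨0, ⟨0, by decide⟩⟩ ∨ m = ⟨0, ⟨1, by decide⟩⟩ ∨ m = ⟨1, ⟨0, by decide⟩⟩ := by decide

/-- Bijection between the match sets of players 0 and 1 in `A`. -/
def e01 : (Σ k : Fin 4, Fin (A.M 0 k)) ≃ (Σ k : Fin 4, Fin (A.M 1 k)) where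
  toFun m := if m.1 = 2 then ⟨2, ⟨0, by decide⟩⟩
    else if m.2.1 = 0 then ⟨2, ⟨1, by decide⟩⟩ else ⟨3, ⟨0, by decide⟩⟩
  invFun m := if m.1 = 3 then ⟨3, ⟨1, by decide⟩⟩
    else if m.2.1 = 0 then ⟨2, ⟨0, by decide⟩⟩ else ⟨3, ⟨0, by decide⟩⟩
  left_inv := by intro m; revert m; decide
  right_inv := by intro m; revert m; decide

/-- Bijection between the match sets of players 3 and 2 in `A`. -/
def e32 : (Σ k : Fin 4, Fin (A.M 3 k)) ≃ (Σ k : Fin 4, Fin (A.M 2 k)) where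
  toFun m := if m.1 = 1 then ⟨1, ⟨1, by decide⟩⟩
    else if m.2.1 = 0 then ⟨0, ⟨0, by decide⟩⟩ else ⟨1, ⟨0, by decide⟩⟩
  invFun m := if m.1 = 0 then ⟨0, ⟨0, by decide⟩⟩
    else if m.2.1 = 0 then ⟨0, ⟨1, by decide⟩⟩ else ⟨1, ⟨0, by decide⟩⟩
  left_inv := by intro m; revert m; decide
  right_inv := by intro m; revert m; decide

lemma prem01 (f : RP 4 → Fin 4 → ℝ) (h32 : f A 3 ≥ f A 2) :
    ∀ m : Σ k : Fin 4, Fin (A.M 0 k),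
      dA.res 0 m.1 m.2.1 ≥ dA.res 1 (e01 m).1 (e01 m).2.1 ∧ f A m.1 ≥ f A (e01 m).1 := by
  intro m
  rcases mem0 m with rfl | rfl | rfl
  · exact ⟨by show resA 0 2 0 ≥ resA 1 2 0; simp [resA, RA, RZ], le_refl _⟩
  · exact ⟨by show resA 0 3 0 ≥ resA 1 2 1; simp [resA, RA, RZ], h32⟩
  · exact ⟨by show resA 0 3 1 ≥ resA 1 3 0; simp [resA, RA, RZ], le_refl _⟩

lemma prem10 (f : RP 4 → Fin 4 → ℝ) (h23 : f A 2 ≥ f A 3) :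
    ∀ m : Σ k : Fin 4, Fin (A.M 1 k),
      dA.res 1 m.1 m.2.1 ≥ dA.res 0 (e01.symm m).1 (e01.symm m).2.1 ∧
        f A m.1 ≥ f A (e01.symm m).1 := by
  intro m
  rcases mem1 m with rfl | rfl | rfl
  · exact ⟨by show resA 1 2 0 ≥ resA 0 2 0; simp [resA, RA, RZ], le_refl _⟩
  · exact ⟨by show resA 1 2 1 ≥ resA 0 3 0; simp [resA, RA, RZ], h23⟩
  · exact ⟨by show resA 1 3 0 ≥ resA 0 3 1; simp [resA, RA, RZ], le_refl _⟩

lemma prem32 (f : RP 4 → Fin 4 → ℝ) (h01 : f A 0 ≥ f A 1) :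
    ∀ m : Σ k : Fin 4, Fin (A.M 3 k),
      dA.res 3 m.1 m.2.1 ≥ dA.res 2 (e32 m).1 (e32 m).2.1 ∧ f A m.1 ≥ f A (e32 m).1 := by
  intro m
  rcases mem3 m with rfl | rfl | rfl
  · exact ⟨by show resA 3 0 0 ≥ resA 2 0 0; simp [resA, RA, RZ], le_refl _⟩
  · exact ⟨by show resA 3 0 1 ≥ resA 2 1 0; simp [resA, RA, RZ], h01⟩
  · exact ⟨by show resA 3 1 0 ≥ resA 2 1 1; simp [resA, RA, RZ], le_refl _⟩

theorem no_neu_sym_sop_sc :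
    ¬ ∃ f : RP 4 → Fin 4 → ℝ, NEU f ∧ SYM f ∧ SOP f ∧ SC f := by
  rintro ⟨f, hNEU, hSYM, hSOP, hSC⟩
  have ht0 : tau 0 = 1 := by decide
  have ht1 : tau 1 = 0 := by decide
  have htt : ∀ x : Fin 4, tf (tf x) = x := by decide
  have hRZi : ∀ i j : Fin 4, RZ (tf i) (tf j) = RZ i j := by decide
  have hAinv : ∀ i j : Fin 4, A.R (tf i) (tf j) = A.R i j := by
    intro i j
    show RA (tf i) (tf j) = RA i j
    simp [RA, hRZi i j]
  -- Core contradiction: a problem `X` whose results matrix is invariant under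
  -- swapping players 0 and 1, but where player 0 strictly beats player 1.
  have core : ∀ X : RP 4, (∀ i j, X.R (tf i) (tf j) = X.R i j) → f X 0 > f X 1 → False := by
    intro X hinv h01
    rcases le_or_gt (f X.neg 0) (f X.neg 1) with h | h
    · -- add the reversed problem relabelled by `tau`
      have e0 := hNEU tau X.neg 0
      have e1 := hNEU tau X.neg 1
      rw [ht0] at e0
      rw [ht1] at e1
      have hD : f (X.neg.relabel tau) 0 ≥ f (X.neg.relabel tau) 1 := by
        rw [← e0, ← e1]; exact h
      have hs := (hSOP X (X.neg.relabel tau) 0 1 (le_of_lt h01) hD).2 (Or.inl h01)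
      have hz : ∀ i j, (X.add (X.neg.relabel tau)).R i j = 0 := by
        intro i j
        show X.R i j + -(X.R (tf i) (tf j)) = 0
        rw [hinv i j]; ring
      exact absurd (hSYM (X.add (X.neg.relabel tau)) hz 0 1) (ne_of_gt hs)
    · -- add the reversed problem directly
      have hs := (hSOP X X.neg 0 1 (le_of_lt h01) (le_of_lt h)).2 (Or.inl h01)
      have hz : ∀ i j, (X.add X.neg).R i j = 0 := by
        intro i j
        show X.R i j + -(X.R i j) = 0
        ring
      exact absurd (hSYM (X.add X.neg) hz 0 1) (ne_of_gt hs)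
  rcases lt_trichotomy (f A 0) (f A 1) with h | h | h
  · -- `f A 0 < f A 1`: use the relabelled problem
    have e0 := hNEU tau A 0
    have e1 := hNEU tau A 1
    rw [ht0] at e0
    rw [ht1] at e1
    refine core (A.relabel tau) ?_ ?_
    · intro i j
      show A.R (tf (tf i)) (tf (tf j)) = A.R (tf i) (tf j)
      rw [htt i, htt j]
      exact (hAinv i j).symm
    · rw [← e1, ← e0]; exact h
  · -- `f A 0 = f A 1`: self-consistency gives a contradiction
    rcases lt_trichotomy (f A 2) (f A 3) with hcd | hcd | hcd
    · have hs := (hSC A dA 0 1 e01 (prem01 f (le_of_lt hcd))).2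
        ⟨⟨3, ⟨0, by decide⟩⟩, Or.inr hcd⟩
      exact absurd h (ne_of_gt hs)
    · have hs := (hSC A dA 3 2 e32 (prem32 f (ge_of_eq h))).2
        ⟨⟨0, ⟨0, by decide⟩⟩, Or.inl (by show resA 3 0 0 > resA 2 0 0; simp [resA, RA, RZ])⟩
      exact absurd hcd.symm (ne_of_gt hs)
    · have hs := (hSC A dA 1 0 e01.symm (prem10 f (le_of_lt hcd))).2
        ⟨⟨2, ⟨1, by decide⟩⟩, Or.inr hcd⟩
      exact absurd h.symm (ne_of_gt hs)
  · exact core A hAinv h
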